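/- Let p be a prime and G a finite group such that every element of order p lies in the k-th term of the upper central series of G for some k ≥ 1. Then the subgroup of G generated by all elements of order dividing p is a p-group. -/

import Mathlib

/-- `Omega p i G` is the subgroup of `G` generated by all elements of order dividing `p^i`. -/
def Omega (p i : ℕ) (G : Type*) [Group G] : Subgroup G :=
  Subgroup.closure {x : G | x ^ p ^ i = 1}

/-- A subgroup contained in a term of the upper central series is nilpotent. -/
lemma isNilpotent_of_le_upperCentralSeries {G : Type*} [Group G] {k : ℕ} {H : Subgroup G}
    (h : H ≤ upperCentralSeries G k) : Group.IsNilpotent H := by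
  refine ⟨⟨k, ?_⟩⟩
  have hc : IsAscendingCentralSeries (fun n => (upperCentralSeries G n).comap H.subtype) := by
    constructor
    · simp [upperCentralSeries_zero, MonoidHom.comap_bot, Subgroup.ker_subtype]
      exact disjoint_bot_left
    · intro x n hx y
      simp only [Subgroup.mem_comap] at hx ⊢
      exact mem_upperCentralSeries_succ_iff.mp hx _
  have hle := ascending_central_series_le_upper
    (fun n => (upperCentralSeries G n).comap H.subtype) hc k
  refine top_le_iff.mp (le_trans ?_ hle)
  intro x _
  exact h x.2

/-- If every element of order dividing `p` of a finite group `G` lies in the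
`k`-th term of the upper central series (`k ≥ 1`), then `Ω₁(G,p)` is a `p`-group. -/
theorem omega_isPGroup_of_le_upperCentralSeries
    (p : ℕ) (hp : p.Prime) (G : Type*) [Group G] [Finite G] (k : ℕ) (hk : 1 ≤ k)
    (h : Omega p 1 G ≤ upperCentralSeries G k) :
    IsPGroup p (Omega p 1 G) := by
  haveI : Fact p.Prime := ⟨hp⟩
  set H : Subgroup G := Omega p 1 G with hHdef
  haveI hnil : Group.IsNilpotent H := isNilpotent_of_le_upperCentralSeries h
  obtain ⟨P⟩ : Nonempty (Sylow p H) := inferInstance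
  have h03 := (isNilpotent_of_finite_tfae (G := H)).out 0 3
  have hPnormal : (P : Subgroup H).Normal := h03.mp hnil p ‹Fact p.Prime› P
  haveI := Sylow.unique_of_normal P hPnormal
  -- H is generated (as a group) by its elements of order dividing p
  have htop : (⊤ : Subgroup H) ≤ (P : Subgroup H) := by
    have hcl : Subgroup.closure (((↑) : H → G) ⁻¹' {x : G | x ^ p ^ 1 = 1}) = ⊤ :=
      Subgroup.closure_closure_coe_preimage
    rw [← hcl]
    refine (Subgroup.closure_le _).mpr ?_
    intro y hy
    have hyp : (y : G) ^ p = 1 := by simpa using hy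
    have hy1 : y ^ p = 1 := by
      ext
      simpa using hyp
    have hPy : IsPGroup p (Subgroup.zpowers y) := by
      rintro ⟨g, n, rfl⟩
      refine ⟨1, ?_⟩
      ext
      simp only [pow_one, SubmonoidClass.coe_pow, Subgroup.coe_one, SubgroupClass.coe_zpow]
      rw [← zpow_natCast ((y : G) ^ n) p, ← zpow_mul, mul_comm, zpow_mul, zpow_natCast, hyp,
        one_zpow]
    obtain ⟨Q, hQ⟩ := hPy.exists_le_sylow
    have : Q = P := Subsingleton.elim _ _
    exact this ▸ hQ (Subgroup.mem_zpowers y)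
  have : IsPGroup p (⊤ : Subgroup H) := P.isPGroup'.to_le htop
  exact this.of_equiv Subgroup.topEquiv
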